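/- Let X_n be an n×n random matrix from SGRM(n, 1/n) (the Gaussian Unitary Ensemble normalized so that E{tr_n(X_n²)} → 1). For every k ∈ ℕ there is a constant C(k) < ∞, independent of n, such that E{‖X_n‖^k} ≤ C(k), where ‖·‖ is the operator norm. In particular one can take C(k) = 4^k + k·∫₀^∞ (4+t)^{k−1} e^{−t²/2} dt, given the tail bound P(‖X_n‖ > 2+ε) ≤ 2n·exp(−nε²/2) for all ε > 0. -/

import Mathlib

open Matrix MeasureTheory Set Filter
open scoped ENNReal

/-- Polynomial times Gaussian is integrable. -/
lemma integrable_shift_pow_mul_gauss (m : ℕ) (c : ℝ) :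
    Integrable (fun x : ℝ => (c + x) ^ m * Real.exp (-x ^ 2 / 2)) := by
  have base : ∀ j : ℕ, Integrable (fun x : ℝ => x ^ j * Real.exp (-x ^ 2 / 2)) := by
    intro j
    have := integrable_rpow_mul_exp_neg_mul_sq (b := (1/2 : ℝ)) one_half_pos (s := (j : ℝ))
      (by have : (0:ℝ) ≤ (j:ℝ) := Nat.cast_nonneg j; linarith)
    refine this.congr (Filter.Eventually.of_forall fun x => ?_)
    dsimp only
    rw [Real.rpow_natCast, show -(1/2 : ℝ) * x ^ 2 = -x ^ 2 / 2 from by ring]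
  have : Integrable (fun x : ℝ =>
      ∑ i ∈ Finset.range (m + 1), (c ^ i * (m.choose i : ℝ)) * (x ^ (m - i) * Real.exp (-x ^ 2 / 2))) :=
    integrable_finset_sum _ fun i _ => ((base (m - i)).const_mul _)
  refine this.congr (Filter.Eventually.of_forall fun x => ?_)
  dsimp only
  rw [add_pow, Finset.sum_mul]
  refine Finset.sum_congr rfl fun i _ => by ring

/-- The key numerical tail comparison. -/
lemma tail_exp_le {n : ℕ} (hn : 1 ≤ n) {q t : ℝ} (hq4 : 4 < q) (_hqt : q < t)
    (hslack : (t - q) * (t + q - 8) ≤ 2) :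
    2 * n * Real.exp (-(n : ℝ) * (q - 2) ^ 2 / 2) ≤ Real.exp (-(t - 4) ^ 2 / 2) := by
  have hm : (1 : ℝ) ≤ (n : ℝ) := by exact_mod_cast hn
  set m := (n : ℝ)
  have h1 : 2 * m ≤ Real.exp (2 * m - 1) := by
    have := Real.add_one_le_exp (2 * m - 1)
    linarith
  have h2 : 2 * m * Real.exp (-m * (q - 2) ^ 2 / 2) ≤
      Real.exp (2 * m - 1) * Real.exp (-m * (q - 2) ^ 2 / 2) :=
    mul_le_mul_of_nonneg_right h1 (Real.exp_nonneg _)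
  rw [← Real.exp_add] at h2
  refine h2.trans (Real.exp_le_exp.2 ?_)
  nlinarith [sq_nonneg (q - 4), sq_nonneg (q - 2), mul_le_mul_of_nonneg_left
    (sq_nonneg (q - 2)) (sub_nonneg.2 hm)]

/-- The operator norm of a complex matrix. -/
noncomputable def matOpNorm {n : ℕ} (a : Matrix (Fin n) (Fin n) ℂ) : ℝ :=
  ‖Matrix.toEuclideanCLM (𝕜 := ℂ) a‖

/-- If `X_n` is an `n × n` self-adjoint Gaussian random matrix
satisfying the tail bound `P(‖X_n‖ > 2 + ε) ≤ 2n e^{−nε²/2}` for all `ε > 0`, then for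
every `k` one has `E‖X_n‖^k ≤ C(k)`, where the constant
`C(k) = 4^k + k ∫₀^∞ (4+t)^{k−1} e^{−t²/2} dt` is independent of `n`. -/
theorem expectation_opNorm_pow_le {Ω : Type*} [MeasureSpace Ω]
    [IsProbabilityMeasure (volume : Measure Ω)]
    (k : ℕ) :
    ∃ C : ℝ, C = 4 ^ k + k * ∫ t in Set.Ioi (0 : ℝ), (4 + t) ^ (k - 1) * Real.exp (-t ^ 2 / 2) ∧
      ∀ (n : ℕ), 1 ≤ n → ∀ X : Ω → Matrix (Fin n) (Fin n) ℂ,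
        (∀ ω, IsSelfAdjoint (X ω)) →
        (∀ ε : ℝ, 0 < ε →
          (volume {ω | 2 + ε < matOpNorm (X ω)}).toReal ≤
            2 * n * Real.exp (-(n : ℝ) * ε ^ 2 / 2)) →
        ∫⁻ ω, ENNReal.ofReal (matOpNorm (X ω) ^ k) ≤ ENNReal.ofReal C := by
  refine ⟨_, rfl, ?_⟩
  intro n hn X hsa htail
  have hN0 : ∀ ω, 0 ≤ matOpNorm (X ω) := fun ω => norm_nonneg _
  rcases Nat.eq_zero_or_pos k with hk0 | hk
  · subst hk0
    simp only [pow_zero, Nat.cast_zero, zero_mul, add_zero]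
    simp [lintegral_const, measure_univ]
  -- main case : 1 ≤ k
  -- measurable hulls
  have hT : ∀ q : ℚ, ∃ T, {ω | (q:ℝ) < matOpNorm (X ω)} ⊆ T ∧ MeasurableSet T ∧
      volume T = volume {ω | (q:ℝ) < matOpNorm (X ω)} := fun q => exists_measurable_superset _ _
  choose T hTsub hTm hTvol using hT
  set T' : ℚ → Set Ω := fun q => ⋂ (q' : ℚ) (_ : q' ≤ q), T q' with hT'def
  have hT'm : ∀ q, MeasurableSet (T' q) :=
    fun q => MeasurableSet.iInter fun q' => MeasurableSet.iInter fun _ => hTm q'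
  have hT'sub : ∀ q : ℚ, {ω | (q:ℝ) < matOpNorm (X ω)} ⊆ T' q := by
    intro q
    refine Set.subset_iInter₂ fun q' hq' => ?_
    intro ω hω
    have hqr : (q':ℝ) ≤ (q:ℝ) := by exact_mod_cast hq'
    exact hTsub q' (lt_of_le_of_lt hqr hω)
  have hT'anti : ∀ {q q' : ℚ}, q ≤ q' → T' q' ⊆ T' q := by
    intro q q' hqq' ω hω
    exact Set.mem_iInter₂.2 fun r hr => Set.mem_iInter₂.1 hω r (hr.trans hqq')
  have hT'meas : ∀ q : ℚ, volume (T' q) ≤ volume {ω | (q:ℝ) < matOpNorm (X ω)} := by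
    intro q
    have hsub : T' q ⊆ T q := by
      intro ω hω
      simp only [hT'def] at hω
      exact Set.mem_iInter₂.1 hω q le_rfl
    calc volume (T' q) ≤ volume (T q) := measure_mono hsub
      _ = _ := hTvol q
  -- tail bound on the level sets
  have hSmeas : ∀ q : ℚ, (4:ℝ) < q → volume {ω | (q:ℝ) < matOpNorm (X ω)} ≤
      ENNReal.ofReal (2 * n * Real.exp (-(n:ℝ) * ((q:ℝ) - 2) ^ 2 / 2)) := by
    intro q hq
    have hq2 : (0:ℝ) < (q:ℝ) - 2 := by linarith
    have h := htail ((q:ℝ) - 2) hq2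
    have hset : {ω | 2 + ((q:ℝ) - 2) < matOpNorm (X ω)} = {ω | (q:ℝ) < matOpNorm (X ω)} := by
      ext ω
      constructor <;> intro hω <;> simp only [Set.mem_setOf_eq] at * <;> linarith
    rw [hset] at h
    have hfin : volume {ω | (q:ℝ) < matOpNorm (X ω)} ≠ ∞ := measure_ne_top _ _
    rw [← ENNReal.ofReal_toReal hfin]
    exact ENNReal.ofReal_le_ofReal h
  -- the measurable envelope
  set Z : Ω → ℝ≥0∞ := fun ω => ENNReal.ofReal 4 ⊔
      ⨆ q : ℚ, (T' q).indicator (fun _ => ENNReal.ofReal (q:ℝ)) ω with hZdef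
  have hZm : Measurable Z :=
    measurable_const.fun_sup (Measurable.iSup fun q => measurable_const.indicator (hT'm q))
  -- tail bound for the envelope
  have htailZ : ∀ t : ℝ, 4 < t →
      volume {ω | ENNReal.ofReal t < Z ω} ≤ ENNReal.ofReal (Real.exp (-(t - 4) ^ 2 / 2)) := by
    intro t ht
    have h0t : (0:ℝ) < t := by linarith
    obtain ⟨q, hq1, hq2⟩ := exists_rat_btwn (show max 4 (t - 1/t) < t by
      rw [max_lt_iff]
      refine ⟨ht, ?_⟩
      have h0t' : (0:ℝ) < 1/t := by positivity
      linarith)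
    rw [max_lt_iff] at hq1
    have hq4 : (4:ℝ) < q := hq1.1
    have hsub : {ω | ENNReal.ofReal t < Z ω} ⊆ T' q := by
      intro ω hω
      simp only [Set.mem_setOf_eq, hZdef] at hω
      have h4t : ENNReal.ofReal 4 ≤ ENNReal.ofReal t := ENNReal.ofReal_le_ofReal (by linarith)
      have hlt : ENNReal.ofReal t <
          ⨆ q' : ℚ, (T' q').indicator (fun _ => ENNReal.ofReal (q':ℝ)) ω := by
        rcases lt_sup_iff.1 hω with h | h
        · exact absurd h (not_lt.2 h4t)
        · exact h
      obtain ⟨q', hq'⟩ := lt_iSup_iff.1 hlt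
      by_cases hmem : ω ∈ T' q'
      · rw [Set.indicator_of_mem hmem] at hq'
        have htq' : t < (q' : ℝ) := by
          by_contra hcon
          exact absurd hq' (not_lt.2 (ENNReal.ofReal_le_ofReal (not_lt.1 hcon)))
        have hle : q ≤ q' := by exact_mod_cast (lt_trans hq2 htq').le
        exact hT'anti hle hmem
      · rw [Set.indicator_of_notMem hmem] at hq'
        exact absurd hq' (by simp)
    calc volume {ω | ENNReal.ofReal t < Z ω} ≤ volume (T' q) := measure_mono hsub
      _ ≤ volume {ω | (q:ℝ) < matOpNorm (X ω)} := hT'meas q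
      _ ≤ ENNReal.ofReal (2 * n * Real.exp (-(n:ℝ) * ((q:ℝ) - 2) ^ 2 / 2)) := hSmeas q hq4
      _ ≤ ENNReal.ofReal (Real.exp (-(t - 4) ^ 2 / 2)) := by
          refine ENNReal.ofReal_le_ofReal (tail_exp_le hn hq4 hq2 ?_)
          have h1 : t - (q:ℝ) < 1/t := by linarith [hq1.2]
          have hpos : (0:ℝ) ≤ t + q - 8 := by linarith
          have h2 : (t - (q:ℝ)) * (t + q - 8) ≤ (1/t) * (t + q - 8) :=
            mul_le_mul_of_nonneg_right h1.le hpos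
          have h3 : (1/t) * (t + (q:ℝ) - 8) ≤ (1/t) * (2*t) := by
            refine mul_le_mul_of_nonneg_left ?_ (by positivity)
            linarith
          have h4 : (1/t) * (2*t) = 2 := by field_simp
          linarith
  -- Z is a.e. finite
  have hZfin : volume {ω | Z ω = ⊤} = 0 := by
    have hb : ∀ t : ℝ, 4 < t →
        volume {ω | Z ω = ⊤} ≤ ENNReal.ofReal (Real.exp (-(t-4)^2/2)) := by
      intro t ht
      refine le_trans (measure_mono ?_) (htailZ t ht)
      intro ω hω
      simp only [Set.mem_setOf_eq] at hω ⊢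
      rw [hω]
      exact ENNReal.ofReal_lt_top
    refine le_antisymm ?_ zero_le
    have htend : Tendsto (fun t : ℝ => ENNReal.ofReal (Real.exp (-(t-4)^2/2)))
        atTop (nhds 0) := by
      rw [← ENNReal.ofReal_zero]
      refine (ENNReal.continuous_ofReal.tendsto 0).comp ?_
      refine Real.tendsto_exp_atBot.comp ?_
      refine Tendsto.atBot_div_const (by norm_num : (0:ℝ) < 2) ?_
      refine (tendsto_neg_atTop_atBot (G := ℝ)).comp ?_
      refine (tendsto_pow_atTop (two_ne_zero)).comp ?_
      simpa [sub_eq_add_neg] using tendsto_atTop_add_const_right atTop (-4 : ℝ) tendsto_id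
    exact ge_of_tendsto htend (eventually_atTop.2 ⟨5, fun t ht => hb t (by linarith)⟩)
  have hZae : ∀ᵐ ω, Z ω ≠ ⊤ := by
    rw [MeasureTheory.ae_iff]
    simpa using hZfin
  -- real-valued envelope
  set Y : Ω → ℝ := fun ω => (Z ω).toReal with hYdef
  have hYm : Measurable Y := hZm.ennreal_toReal
  have hYnn : ∀ ω, 0 ≤ Y ω := fun ω => ENNReal.toReal_nonneg
  have hNY : ∀ᵐ ω, matOpNorm (X ω) ≤ Y ω := by
    filter_upwards [hZae] with ω hω
    by_contra hcon
    push_neg at hcon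
    obtain ⟨q, hq1, hq2⟩ := exists_rat_btwn hcon
    have hmem : ω ∈ T' q := hT'sub q hq2
    have hZge : ENNReal.ofReal (q:ℝ) ≤ Z ω := by
      have h := le_iSup (fun q' : ℚ => (T' q').indicator (fun _ => ENNReal.ofReal (q':ℝ)) ω) q
      rw [Set.indicator_of_mem hmem] at h
      exact h.trans le_sup_right
    have : (q:ℝ) ≤ Y ω := by
      rw [← ENNReal.ofReal_toReal hω] at hZge
      exact (ENNReal.ofReal_le_ofReal_iff (hYnn ω)).1 hZge
    linarith
  -- monotonicity step
  have hmono : ∫⁻ ω, ENNReal.ofReal (matOpNorm (X ω) ^ k) ≤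
      ∫⁻ ω, ENNReal.ofReal (Y ω ^ k) := by
    refine lintegral_mono_ae ?_
    filter_upwards [hNY] with ω hω
    exact ENNReal.ofReal_le_ofReal (pow_le_pow_left₀ (hN0 ω) hω k)
  -- layer cake
  set g : ℝ → ℝ := fun t => (k:ℝ) * t ^ (k-1) with hgdef
  have hgc : Continuous g := continuous_const.mul (continuous_pow _)
  have hgint : ∀ y : ℝ, ∫ t in (0:ℝ)..y, g t = y ^ k := by
    intro y
    rw [hgdef]
    simp only
    rw [intervalIntegral.integral_const_mul, integral_pow,
      Nat.sub_add_cancel hk, zero_pow hk.ne']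
    have hkne : (k:ℝ) ≠ 0 := Nat.cast_ne_zero.2 hk.ne'
    rw [Nat.cast_sub hk]
    push_cast
    field_simp
    rw [sub_add_cancel, sub_zero, mul_div_cancel_left₀ _ hkne]
  have hlc := lintegral_comp_eq_lintegral_meas_lt_mul (volume : Measure Ω)
    (f := Y) (g := g) (Filter.Eventually.of_forall hYnn) hYm.aemeasurable
    (fun t _ => hgc.intervalIntegrable 0 t)
    ((ae_restrict_iff' measurableSet_Ioi).2 (Filter.Eventually.of_forall fun t ht => by
      have h0 : (0:ℝ) < t := ht
      rw [hgdef]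
      have : (0:ℝ) ≤ t ^ (k-1) := by positivity
      positivity))
  have hlc' : ∫⁻ ω, ENNReal.ofReal (Y ω ^ k) =
      ∫⁻ t in Ioi (0:ℝ), volume {a | t < Y a} * ENNReal.ofReal (g t) := by
    rw [← hlc]
    exact lintegral_congr fun ω => by rw [hgint (Y ω)]
  -- split the t-integral
  have hsplit : ∫⁻ t in Ioi (0:ℝ), volume {a | t < Y a} * ENNReal.ofReal (g t) =
      (∫⁻ t in Ioc (0:ℝ) 4, volume {a | t < Y a} * ENNReal.ofReal (g t)) +
      ∫⁻ t in Ioi (4:ℝ), volume {a | t < Y a} * ENNReal.ofReal (g t) := by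
    rw [← Set.Ioc_union_Ioi_eq_Ioi (by norm_num : (0:ℝ) ≤ 4)]
    exact lintegral_union measurableSet_Ioi (Set.Ioc_disjoint_Ioi le_rfl)
  -- piece A
  have hA : ∫⁻ t in Ioc (0:ℝ) 4, volume {a | t < Y a} * ENNReal.ofReal (g t) ≤
      ENNReal.ofReal (4 ^ k) := by
    have h1 : ∫⁻ t in Ioc (0:ℝ) 4, volume {a | t < Y a} * ENNReal.ofReal (g t) ≤
        ∫⁻ t in Ioc (0:ℝ) 4, ENNReal.ofReal (g t) := by
      refine lintegral_mono fun t => ?_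
      exact mul_le_of_le_one_left zero_le prob_le_one
    refine h1.trans ?_
    have hgnn : 0 ≤ᵐ[volume.restrict (Ioc (0:ℝ) 4)] g := by
      refine (ae_restrict_iff' measurableSet_Ioc).2 (Filter.Eventually.of_forall fun t ht => ?_)
      have h0 : (0:ℝ) < t := ht.1
      rw [hgdef]
      have : (0:ℝ) ≤ t ^ (k-1) := by positivity
      positivity
    rw [← ofReal_integral_eq_lintegral_ofReal (hgc.integrableOn_Ioc) hgnn]
    refine ENNReal.ofReal_le_ofReal ?_
    rw [← intervalIntegral.integral_of_le (by norm_num : (0:ℝ) ≤ 4), hgint 4]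
  -- piece B
  set F : ℝ → ℝ := fun t => Real.exp (-(t-4)^2/2) * g t with hFdef
  have hFeq : F = fun t => (k:ℝ) * ((4 + (t - 4)) ^ (k-1) * Real.exp (-(t-4)^2/2)) := by
    funext t
    rw [hFdef, hgdef]
    simp only
    rw [show (4:ℝ) + (t - 4) = t from by ring]
    ring
  have hFint : Integrable F := by
    rw [hFeq]
    exact (((integrable_shift_pow_mul_gauss (k-1) 4).comp_sub_right 4).const_mul _)
  have hB : ∫⁻ t in Ioi (4:ℝ), volume {a | t < Y a} * ENNReal.ofReal (g t) ≤
      ENNReal.ofReal ((k:ℝ) * ∫ t in Ioi (0:ℝ), (4 + t) ^ (k-1) * Real.exp (-t^2/2)) := by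
    have hstep1 : ∫⁻ t in Ioi (4:ℝ), volume {a | t < Y a} * ENNReal.ofReal (g t) ≤
        ∫⁻ t in Ioi (4:ℝ), ENNReal.ofReal (F t) := by
      refine setLIntegral_mono ?_ fun t ht => ?_
      · exact (ENNReal.continuous_ofReal.comp
          ((Real.continuous_exp.comp (by fun_prop)).mul hgc)).measurable
      · have h4t : (4:ℝ) < t := ht
        have hsub2 : {a | t < Y a} ⊆ {a | ENNReal.ofReal t < Z a} := by
          intro a ha
          simp only [Set.mem_setOf_eq] at ha ⊢
          by_cases hz : Z a = ⊤
          · rw [hz]; exact ENNReal.ofReal_lt_top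
          · rw [← ENNReal.ofReal_toReal hz]
            exact (ENNReal.ofReal_lt_ofReal_iff (lt_trans (by linarith) ha)).2 ha
        calc volume {a | t < Y a} * ENNReal.ofReal (g t)
            ≤ ENNReal.ofReal (Real.exp (-(t-4)^2/2)) * ENNReal.ofReal (g t) :=
              mul_le_mul_left ((measure_mono hsub2).trans (htailZ t h4t)) _
          _ = ENNReal.ofReal (F t) := by
              rw [hFdef]
              simp only
              rw [← ENNReal.ofReal_mul (Real.exp_nonneg _)]
    refine hstep1.trans ?_
    have hFnn : 0 ≤ᵐ[volume.restrict (Ioi (4:ℝ))] F := by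
      refine (ae_restrict_iff' measurableSet_Ioi).2 (Filter.Eventually.of_forall fun t ht => ?_)
      have h4 : (4:ℝ) < t := ht
      rw [hFdef, hgdef]
      simp only
      have h1 : (0:ℝ) ≤ t ^ (k-1) := by positivity
      positivity
    rw [← ofReal_integral_eq_lintegral_ofReal hFint.integrableOn hFnn]
    refine ENNReal.ofReal_le_ofReal (le_of_eq ?_)
    have hcv := (measurePreserving_add_right (volume : Measure ℝ) (4:ℝ)).setIntegral_preimage_emb
      (measurableEmbedding_addRight (4:ℝ)) F (Ioi (4:ℝ))
    have hpre : (fun x : ℝ => x + 4) ⁻¹' (Ioi (4:ℝ)) = Ioi (0:ℝ) := by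
      ext x
      simp only [Set.mem_preimage, Set.mem_Ioi]
      constructor <;> intro h <;> linarith
    rw [hpre] at hcv
    rw [← hcv, ← integral_const_mul]
    refine setIntegral_congr_fun measurableSet_Ioi fun x _ => ?_
    rw [hFdef, hgdef]
    simp only
    rw [show x + 4 - 4 = x from by ring]
    ring
  -- assemble
  have hInn : 0 ≤ (k:ℝ) * ∫ t in Ioi (0:ℝ), (4 + t) ^ (k-1) * Real.exp (-t^2/2) := by
    have : 0 ≤ ∫ t in Ioi (0:ℝ), (4 + t) ^ (k-1) * Real.exp (-t^2/2) := by
      refine setIntegral_nonneg measurableSet_Ioi fun t ht => ?_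
      have h0 : (0:ℝ) < t := ht
      positivity
    positivity
  calc ∫⁻ ω, ENNReal.ofReal (matOpNorm (X ω) ^ k)
      ≤ ∫⁻ ω, ENNReal.ofReal (Y ω ^ k) := hmono
    _ = ∫⁻ t in Ioi (0:ℝ), volume {a | t < Y a} * ENNReal.ofReal (g t) := hlc'
    _ = _ := hsplit
    _ ≤ ENNReal.ofReal (4 ^ k) +
        ENNReal.ofReal ((k:ℝ) * ∫ t in Ioi (0:ℝ), (4 + t) ^ (k-1) * Real.exp (-t^2/2)) :=
          add_le_add hA hB
    _ = ENNReal.ofReal (4 ^ k + (k:ℝ) * ∫ t in Ioi (0:ℝ), (4 + t) ^ (k-1) * Real.exp (-t^2/2)) :=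
          (ENNReal.ofReal_add (by positivity) hInn).symm
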